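/- Let K be a consistent and deductively closed set of propositional formulas, let {Φ_C, Φ_A, Φ_R} be a credibility partition of the set Φ of all formulas, and let B°_K : Φ → 2^Φ be a filtered belief revision function based on K. Then there exists a basic AGM belief revision function B*_K : Φ → 2^Φ such that for all φ ∈ Φ: B°_K(φ) = K if φ ∈ Φ_R, B°_K(φ) = B*_K(φ) if φ ∈ Φ_C, and B°_K(φ) = K ∩ B*_K(φ) if φ ∈ Φ_A. -/

import Mathlib

/-! Propositional language built from a set of atomic formulas via negation and disjunction. -/

inductive PropForm (α : Type) : Type
  | atom : α → PropForm α
  | neg : PropForm α → PropForm α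
  | or : PropForm α → PropForm α → PropForm α

namespace PropForm

/-- Truth value of a formula under a boolean valuation of the atoms. -/
def eval (v : α → Bool) : PropForm α → Bool
  | atom a => v a
  | neg φ => !(eval v φ)
  | or φ ψ => (eval v φ) || (eval v ψ)

/-- Conjunction, defined from negation and disjunction. -/
def and (φ ψ : PropForm α) : PropForm α := neg (or (neg φ) (neg ψ))

/-- Material implication. -/
def imp (φ ψ : PropForm α) : PropForm α := or (neg φ) ψ

/-- Biconditional. -/
def biimp (φ ψ : PropForm α) : PropForm α := and (imp φ ψ) (imp ψ φ)

/-- A formula is a tautology if it is true under every boolean valuation. -/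
def Tautology (φ : PropForm α) : Prop := ∀ v : α → Bool, eval v φ = true

/-- A formula is a contradiction if it is false under every boolean valuation. -/
def Contradiction (φ : PropForm α) : Prop := ∀ v : α → Bool, eval v φ = false

end PropForm

open PropForm

/-- The PL-deductive closure of `F`: ψ ∈ [F]^PL iff there are φ₁,…,φₙ ∈ F (n ≥ 0) such that
(φ₁ ∧ … ∧ φₙ) → ψ is a tautology (stated via the equivalent curried implication
φ₁ → (φ₂ → ⋯ → ψ)). -/
def Cn (F : Set (PropForm α)) : Set (PropForm α) :=
  {ψ | ∃ l : List (PropForm α), (∀ φ ∈ l, φ ∈ F) ∧ Tautology (l.foldr PropForm.imp ψ)}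

/-- A set of formulas is consistent if its deductive closure is not the set of all formulas. -/
def ConsistentSet (F : Set (PropForm α)) : Prop := Cn F ≠ Set.univ

/-- A set of formulas is deductively closed if it equals its own deductive closure. -/
def DedClosed (F : Set (PropForm α)) : Prop := F = Cn F

/-- A credibility partition of the set of formulas into credible (ΦC), allowable (ΦA) and
rejected (ΦR) formulas. -/
structure CredPartition (ΦC ΦA ΦR : Set (PropForm α)) : Prop where
  disjCA : Disjoint ΦC ΦA
  disjCR : Disjoint ΦC ΦR
  disjAR : Disjoint ΦA ΦR
  cover : ΦC ∪ ΦA ∪ ΦR = Set.univ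
  taut_mem_C : ∀ φ : PropForm α, Tautology φ → φ ∈ ΦC
  C_consistent : ∀ φ ∈ ΦC, ¬ Contradiction φ
  C_equiv_closed : ∀ φ ψ : PropForm α, Tautology (φ.biimp ψ) → φ ∈ ΦC → ψ ∈ ΦC
  A_consistent : ∀ φ ∈ ΦA, ¬ Contradiction φ
  A_equiv_closed : ∀ φ ψ : PropForm α, Tautology (φ.biimp ψ) → φ ∈ ΦA → ψ ∈ ΦA
  contra_mem_R : ∀ φ : PropForm α, Contradiction φ → φ ∈ ΦR

/-- Basic AGM belief revision function based on K: postulates AGM1–AGM6. -/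
structure IsBasicAGM (K : Set (PropForm α)) (B : PropForm α → Set (PropForm α)) : Prop where
  agm1 : ∀ φ : PropForm α, B φ = Cn (B φ)
  agm2 : ∀ φ : PropForm α, φ ∈ B φ
  agm3 : ∀ φ : PropForm α, B φ ⊆ Cn (K ∪ {φ})
  agm4 : ∀ φ : PropForm α, φ.neg ∉ K → Cn (K ∪ {φ}) ⊆ B φ
  agm5 : ∀ φ : PropForm α, B φ = Set.univ ↔ Contradiction φ
  agm6 : ∀ φ ψ : PropForm α, Tautology (φ.biimp ψ) → B φ = B ψ

/-- Filtered belief revision function based on K, relative to a credibility partition. -/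
structure IsFiltered (ΦC ΦA ΦR K : Set (PropForm α))
    (B : PropForm α → Set (PropForm α)) : Prop where
  f1 : ∀ φ ∈ ΦR, B φ = K
  f2a : ∀ φ : PropForm α, φ.neg ∉ K → φ ∈ ΦC → B φ = Cn (K ∪ {φ})
  f2b : ∀ φ : PropForm α, φ.neg ∉ K → φ ∈ ΦA → B φ = K
  f3 : ∀ φ : PropForm α, φ.neg ∈ K → ConsistentSet (B φ) ∧ DedClosed (B φ)
  f3a : ∀ φ : PropForm α, φ.neg ∈ K → φ ∈ ΦC → φ ∈ B φ
  f3b : ∀ φ : PropForm α, φ.neg ∈ K → φ ∈ ΦA →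
    B φ ⊆ K \ {φ.neg} ∧ Cn (B φ ∪ {φ.neg}) = K
  f4 : ∀ φ ψ : PropForm α, Tautology (φ.biimp ψ) → B φ = B ψ
namespace FilteredAux
open PropForm

variable {α : Type}

lemma eval_imp (v : α → Bool) (φ ψ : PropForm α) :
    eval v (φ.imp ψ) = (!(eval v φ) || eval v ψ) := rfl

lemma eval_foldr_imp (v : α → Bool) (l : List (PropForm α)) (ψ : PropForm α) :
    (eval v (l.foldr PropForm.imp ψ) = true) ↔
      ((∀ x ∈ l, eval v x = true) → eval v ψ = true) := by
  induction l with
  | nil => simp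
  | cons a t ih =>
    show (!(eval v a) || eval v (t.foldr PropForm.imp ψ)) = true ↔ _
    cases h : eval v a <;> simp [h, ih]

lemma mem_Cn_iff {F : Set (PropForm α)} {ψ : PropForm α} :
    ψ ∈ Cn F ↔ ∃ l : List (PropForm α), (∀ φ ∈ l, φ ∈ F) ∧
      ∀ v : α → Bool, (∀ x ∈ l, eval v x = true) → eval v ψ = true := by
  simp only [Cn, Tautology, Set.mem_setOf_eq, eval_foldr_imp]

lemma subset_Cn {F : Set (PropForm α)} : F ⊆ Cn F := fun φ hφ =>
  mem_Cn_iff.2 ⟨[φ], by simp [hφ], fun v hv => hv φ (by simp)⟩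

lemma cn_of_entails {F : Set (PropForm α)} :
    ∀ (l : List (PropForm α)), (∀ x ∈ l, x ∈ Cn F) →
    ∀ ψ : PropForm α, (∀ v, (∀ x ∈ l, eval v x = true) → eval v ψ = true) → ψ ∈ Cn F := by
  intro l
  induction l with
  | nil =>
    intro _ ψ h
    exact mem_Cn_iff.2 ⟨[], by simp, fun v _ => h v (by simp)⟩
  | cons a t ih =>
    intro hmem ψ h
    have ha : a ∈ Cn F := hmem a (by simp)
    have himp : a.imp ψ ∈ Cn F := by
      apply ih (fun x hx => hmem x (List.mem_cons_of_mem _ hx))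
      intro v hv
      rw [eval_imp]
      cases haev : eval v a
      · simp
      · simp only [haev, Bool.not_true, Bool.false_or]
        apply h v
        intro x hx
        rcases List.mem_cons.1 hx with rfl | hx
        · exact haev
        · exact hv x hx
    obtain ⟨la, hla, hsa⟩ := mem_Cn_iff.1 ha
    obtain ⟨li, hli, hsi⟩ := mem_Cn_iff.1 himp
    refine mem_Cn_iff.2 ⟨la ++ li, ?_, ?_⟩
    · intro x hx
      rcases List.mem_append.1 hx with h' | h'
      · exact hla x h'
      · exact hli x h'
    · intro v hv
      have h1 := hsa v (fun x hx => hv x (List.mem_append.2 (Or.inl hx)))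
      have h2 := hsi v (fun x hx => hv x (List.mem_append.2 (Or.inr hx)))
      rw [eval_imp] at h2
      simpa [h1] using h2

lemma Cn_subset {F G : Set (PropForm α)} (h : G ⊆ Cn F) : Cn G ⊆ Cn F := by
  intro ψ hψ
  obtain ⟨l, hl, hs⟩ := mem_Cn_iff.1 hψ
  exact cn_of_entails l (fun x hx => h (hl x hx)) ψ hs

lemma Cn_mono {F G : Set (PropForm α)} (h : F ⊆ G) : Cn F ⊆ Cn G :=
  Cn_subset (h.trans subset_Cn)

lemma Cn_idem {F : Set (PropForm α)} : Cn (Cn F) = Cn F :=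
  Set.Subset.antisymm (Cn_subset (fun _ h => h)) subset_Cn

lemma Cn_univ : Cn (Set.univ : Set (PropForm α)) = Set.univ :=
  Set.Subset.antisymm (fun _ _ => Set.mem_univ _) subset_Cn

lemma soundness {F : Set (PropForm α)} {ψ : PropForm α} (h : ψ ∈ Cn F) (v : α → Bool)
    (hv : ∀ χ ∈ F, eval v χ = true) : eval v ψ = true := by
  obtain ⟨l, hl, hs⟩ := mem_Cn_iff.1 h
  exact hs v (fun x hx => hv x (hl x hx))

lemma single_conseq {F : Set (PropForm α)} {χ ψ : PropForm α} (h : χ ∈ Cn F)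
    (hent : ∀ v, eval v χ = true → eval v ψ = true) : ψ ∈ Cn F :=
  cn_of_entails [χ] (by simpa using h) ψ (fun v hv => hent v (hv χ (by simp)))

lemma taut_mem_Cn {F : Set (PropForm α)} {ψ : PropForm α} (h : Tautology ψ) : ψ ∈ Cn F :=
  mem_Cn_iff.2 ⟨[], by simp, fun v _ => h v⟩

lemma deduction {F : Set (PropForm α)} {φ ψ : PropForm α} :
    ψ ∈ Cn (F ∪ {φ}) ↔ φ.imp ψ ∈ Cn F := by
  classical
  constructor
  · intro h
    obtain ⟨l, hl, hs⟩ := mem_Cn_iff.1 h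
    refine mem_Cn_iff.2 ⟨l.filter (fun x => decide (x ∈ F)), ?_, ?_⟩
    · intro x hx
      exact of_decide_eq_true (List.mem_filter.1 hx).2
    · intro v hv
      rw [eval_imp]
      cases hφ : eval v φ
      · simp
      · simp only [Bool.not_true, Bool.false_or]
        apply hs v
        intro x hx
        by_cases hxF : x ∈ F
        · exact hv x (List.mem_filter.2 ⟨hx, decide_eq_true hxF⟩)
        · have hxφ : x = φ := by
            rcases hl x hx with h' | h'
            · exact absurd h' hxF
            · simpa using h'
          rw [hxφ]; exact hφ
  · intro h
    obtain ⟨l, hl, hs⟩ := mem_Cn_iff.1 h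
    refine mem_Cn_iff.2 ⟨φ :: l, ?_, ?_⟩
    · intro x hx
      rcases List.mem_cons.1 hx with rfl | hx
      · exact Set.mem_union_right _ rfl
      · exact Set.mem_union_left _ (hl x hx)
    · intro v hv
      have h1 := hs v (fun x hx => hv x (List.mem_cons_of_mem _ hx))
      have h2 := hv φ List.mem_cons_self
      rw [eval_imp] at h1
      simpa [h2] using h1

lemma cn_union_eq_univ_iff {F : Set (PropForm α)} {φ : PropForm α} :
    Cn (F ∪ {φ}) = Set.univ ↔ φ.neg ∈ Cn F := by
  constructor
  · intro h
    have h1 : φ.neg ∈ Cn (F ∪ {φ}) := h ▸ Set.mem_univ _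
    have h2 : φ.imp φ.neg ∈ Cn F := deduction.1 h1
    apply single_conseq h2
    intro v hv
    rw [eval_imp] at hv
    cases hφ : eval v φ
    · show (!(eval v φ)) = true
      simp [hφ]
    · exfalso
      have : eval v (PropForm.neg φ) = false := by show (!(eval v φ)) = false; simp [hφ]
      rw [hφ, this] at hv
      simp at hv
  · intro h
    apply Set.eq_univ_of_forall
    intro ψ
    apply cn_of_entails [φ.neg, φ]
    · intro x hx
      rcases List.mem_cons.1 hx with rfl | hx
      · exact Cn_mono Set.subset_union_left h
      · have : x = φ := by simpa using hx
        rw [this]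
        exact subset_Cn (Set.mem_union_right _ rfl)
    · intro v hv
      have h1 := hv φ.neg (by simp)
      have h2 := hv φ (by simp)
      have : (!(eval v φ)) = true := h1
      rw [h2] at this
      simp at this

lemma eval_biimp {v : α → Bool} {φ ψ : PropForm α} :
    eval v (φ.biimp ψ) = true ↔ eval v φ = eval v ψ := by
  cases h1 : eval v φ <;> cases h2 : eval v ψ <;>
    simp [PropForm.biimp, PropForm.and, PropForm.imp, PropForm.eval, h1, h2]

lemma equiv_eval {φ ψ : PropForm α} (h : Tautology (φ.biimp ψ)) :
    ∀ v, eval v φ = eval v ψ := fun v => eval_biimp.1 (h v)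

lemma cn_insert_eq_of_equiv {F : Set (PropForm α)} {φ ψ : PropForm α}
    (h : ∀ v, eval v φ = eval v ψ) : Cn (F ∪ {φ}) = Cn (F ∪ {ψ}) := by
  have key : ∀ χ ξ : PropForm α, (∀ v, eval v χ = eval v ξ) →
      Cn (F ∪ {χ}) ⊆ Cn (F ∪ {ξ}) := by
    intro χ ξ hcx
    apply Cn_subset
    apply Set.union_subset
    · exact Set.subset_union_left.trans subset_Cn
    · intro x hx
      have : x = χ := by simpa using hx
      subst this
      apply single_conseq (F := F ∪ {ξ}) (χ := ξ)
      · exact subset_Cn (Set.mem_union_right _ rfl)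
      · intro v hv
        rw [hcx v]; exact hv
  exact Set.Subset.antisymm (key φ ψ h) (key ψ φ (fun v => (h v).symm))

lemma cn_singleton_eq_of_equiv {φ ψ : PropForm α}
    (h : ∀ v, eval v φ = eval v ψ) : Cn ({φ} : Set (PropForm α)) = Cn {ψ} := by
  have := cn_insert_eq_of_equiv (F := (∅ : Set (PropForm α))) h
  simpa using this

end FilteredAux

open FilteredAux
/-- Proposition 1, (A) ⇒ (B): every filtered belief revision function is obtained
from some basic AGM belief revision function by filtering through the credibility partition. -/
theorem filtered_to_basicAGM_representation {α : Type} [Countable α] [Nonempty α]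
    (ΦC ΦA ΦR K : Set (PropForm α)) (hpart : CredPartition ΦC ΦA ΦR)
    (hKcons : ConsistentSet K) (hKded : DedClosed K)
    (Bo : PropForm α → Set (PropForm α)) (hfilt : IsFiltered ΦC ΦA ΦR K Bo) :
    ∃ Bs : PropForm α → Set (PropForm α), IsBasicAGM K Bs ∧
      ∀ φ : PropForm α,
        (φ ∈ ΦR → Bo φ = K) ∧
        (φ ∈ ΦC → Bo φ = Bs φ) ∧
        (φ ∈ ΦA → Bo φ = K ∩ Bs φ) := by
  classical
  have hKCn : Cn K = K := hKded.symm
  set Bs : PropForm α → Set (PropForm α) := fun φ =>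
    if Contradiction φ then Set.univ
    else if φ ∈ ΦC then Bo φ
    else if φ ∈ ΦA then Cn (Bo φ ∪ {φ})
    else if φ.neg ∈ K then Cn {φ} else Cn (K ∪ {φ}) with hBsdef
  have hval : ∀ φ : PropForm α, Bs φ =
      if Contradiction φ then Set.univ
      else if φ ∈ ΦC then Bo φ
      else if φ ∈ ΦA then Cn (Bo φ ∪ {φ})
      else if φ.neg ∈ K then Cn {φ} else Cn (K ∪ {φ}) := fun φ => rfl
  -- basic facts
  have hKsub : ∀ φ : PropForm α, K ⊆ Cn (K ∪ {φ}) :=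
    fun φ => Set.subset_union_left.trans subset_Cn
  have hunivK : ∀ φ : PropForm α, φ.neg ∈ K → Cn (K ∪ {φ}) = Set.univ :=
    fun φ h => cn_union_eq_univ_iff.2 (subset_Cn h)
  have hconsK : ∀ φ : PropForm α, φ.neg ∉ K → Cn (K ∪ {φ}) ≠ Set.univ := by
    intro φ h hcon
    exact h (hKCn ▸ cn_union_eq_univ_iff.1 hcon)
  have hneg_taut : ∀ φ : PropForm α, Contradiction φ → Tautology φ.neg := by
    intro φ h v
    show (!(eval v φ)) = true
    simp [h v]
  have hnotc_univ : ∀ φ : PropForm α, ¬ Contradiction φ → Cn ({φ} : Set (PropForm α)) ≠ Set.univ := by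
    intro φ h hcon
    have hv : ∃ v : α → Bool, eval v φ = true := by
      by_contra hno
      push_neg at hno
      exact h (fun v => by
        have := hno v
        cases hev : eval v φ
        · rfl
        · exact absurd hev this)
    obtain ⟨v, hv⟩ := hv
    have hmem : φ.neg ∈ Cn ({φ} : Set (PropForm α)) := hcon ▸ Set.mem_univ _
    have := soundness hmem v (by
      intro χ hχ
      have : χ = φ := hχ
      rw [this]; exact hv)
    rw [show eval v φ.neg = (!(eval v φ)) from rfl, hv] at this
    simp at this
  -- value lemmas
  have hvC : ∀ φ ∈ ΦC, Bs φ = Bo φ := by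
    intro φ hφ
    rw [hval φ, if_neg (hpart.C_consistent φ hφ), if_pos hφ]
  have hvA : ∀ φ ∈ ΦA, Bs φ = Cn (Bo φ ∪ {φ}) := by
    intro φ hφ
    rw [hval φ, if_neg (hpart.A_consistent φ hφ),
      if_neg (Set.disjoint_right.1 hpart.disjCA hφ), if_pos hφ]
  -- prove postulates
  refine ⟨Bs, ⟨?_, ?_, ?_, ?_, ?_, ?_⟩, ?_⟩
  · -- AGM1
    intro φ
    rw [hval φ]
    by_cases hc : Contradiction φ
    · rw [if_pos hc, Cn_univ]
    rw [if_neg hc]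
    by_cases hC : φ ∈ ΦC
    · rw [if_pos hC]
      by_cases hnK : φ.neg ∈ K
      · exact (hfilt.f3 φ hnK).2
      · rw [hfilt.f2a φ hnK hC, Cn_idem]
    rw [if_neg hC]
    by_cases hA : φ ∈ ΦA
    · rw [if_pos hA, Cn_idem]
    rw [if_neg hA]
    by_cases hnK : φ.neg ∈ K
    · rw [if_pos hnK, Cn_idem]
    · rw [if_neg hnK, Cn_idem]
  · -- AGM2
    intro φ
    rw [hval φ]
    by_cases hc : Contradiction φ
    · rw [if_pos hc]; exact Set.mem_univ _
    rw [if_neg hc]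
    by_cases hC : φ ∈ ΦC
    · rw [if_pos hC]
      by_cases hnK : φ.neg ∈ K
      · exact hfilt.f3a φ hnK hC
      · rw [hfilt.f2a φ hnK hC]
        exact subset_Cn (Set.mem_union_right _ rfl)
    rw [if_neg hC]
    by_cases hA : φ ∈ ΦA
    · rw [if_pos hA]; exact subset_Cn (Set.mem_union_right _ rfl)
    rw [if_neg hA]
    by_cases hnK : φ.neg ∈ K
    · rw [if_pos hnK]; exact subset_Cn rfl
    · rw [if_neg hnK]; exact subset_Cn (Set.mem_union_right _ rfl)
  · -- AGM3
    intro φ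
    rw [hval φ]
    by_cases hc : Contradiction φ
    · rw [if_pos hc, cn_union_eq_univ_iff.2 (taut_mem_Cn (hneg_taut φ hc))]
    rw [if_neg hc]
    by_cases hnK : φ.neg ∈ K
    · rw [hunivK φ hnK]
      intro x _; exact Set.mem_univ x
    have hBo : φ.neg ∉ K := hnK
    by_cases hC : φ ∈ ΦC
    · rw [if_pos hC, hfilt.f2a φ hBo hC]
    rw [if_neg hC]
    by_cases hA : φ ∈ ΦA
    · rw [if_pos hA, hfilt.f2b φ hBo hA]
    · rw [if_neg hA, if_neg hnK]
  · -- AGM4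
    intro φ hnK
    rw [hval φ]
    by_cases hc : Contradiction φ
    · exact absurd (hKCn ▸ taut_mem_Cn (hneg_taut φ hc)) hnK
    rw [if_neg hc]
    by_cases hC : φ ∈ ΦC
    · rw [if_pos hC, hfilt.f2a φ hnK hC]
    rw [if_neg hC]
    by_cases hA : φ ∈ ΦA
    · rw [if_pos hA, hfilt.f2b φ hnK hA]
    · rw [if_neg hA, if_neg hnK]
  · -- AGM5
    intro φ
    rw [hval φ]
    constructor
    · intro h
      by_contra hc
      rw [if_neg hc] at h
      by_cases hC : φ ∈ ΦC
      · rw [if_pos hC] at h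
        by_cases hnK : φ.neg ∈ K
        · have hcons := (hfilt.f3 φ hnK).1
          have hded := (hfilt.f3 φ hnK).2
          rw [DedClosed] at hded
          exact hcons (by rw [← hded, h])
        · rw [hfilt.f2a φ hnK hC] at h
          exact hconsK φ hnK h
      rw [if_neg hC] at h
      by_cases hA : φ ∈ ΦA
      · rw [if_pos hA] at h
        by_cases hnK : φ.neg ∈ K
        · have hded := (hfilt.f3 φ hnK).2
          have hmem : φ.neg ∈ Cn (Bo φ) := cn_union_eq_univ_iff.1 h
          rw [← hded] at hmem
          have := (hfilt.f3b φ hnK hA).1 hmem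
          exact this.2 rfl
        · rw [hfilt.f2b φ hnK hA] at h
          exact hconsK φ hnK h
      rw [if_neg hA] at h
      by_cases hnK : φ.neg ∈ K
      · rw [if_pos hnK] at h
        exact hnotc_univ φ hc h
      · rw [if_neg hnK] at h
        exact hconsK φ hnK h
    · intro h
      rw [if_pos h]
  · -- AGM6
    intro φ ψ htaut
    have heq : ∀ v, eval v φ = eval v ψ := equiv_eval htaut
    have htaut' : Tautology (ψ.biimp φ) := fun v => eval_biimp.2 (heq v).symm
    have hceq : Contradiction φ ↔ Contradiction ψ := by
      constructor <;> intro h v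
      · rw [← heq v]; exact h v
      · rw [heq v]; exact h v
    have hCeq : (φ ∈ ΦC) ↔ (ψ ∈ ΦC) :=
      ⟨hpart.C_equiv_closed φ ψ htaut, hpart.C_equiv_closed ψ φ htaut'⟩
    have hAeq : (φ ∈ ΦA) ↔ (ψ ∈ ΦA) :=
      ⟨hpart.A_equiv_closed φ ψ htaut, hpart.A_equiv_closed ψ φ htaut'⟩
    have hKeq : (φ.neg ∈ K) ↔ (ψ.neg ∈ K) := by
      have key : ∀ χ ξ : PropForm α, (∀ v, eval v χ = eval v ξ) → χ.neg ∈ K → ξ.neg ∈ K := by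
        intro χ ξ hcx h
        rw [hKded] at h ⊢
        apply single_conseq h
        intro v hv
        show (!(eval v ξ)) = true
        rw [← hcx v]
        exact hv
      exact ⟨key φ ψ heq, key ψ φ (fun v => (heq v).symm)⟩
    have hBoeq : Bo φ = Bo ψ := hfilt.f4 φ ψ htaut
    rw [hval φ, hval ψ]
    by_cases hc : Contradiction φ
    · rw [if_pos hc, if_pos (hceq.1 hc)]
    rw [if_neg hc, if_neg (fun h => hc (hceq.2 h))]
    by_cases hC : φ ∈ ΦC
    · rw [if_pos hC, if_pos (hCeq.1 hC)]
      exact hBoeq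
    rw [if_neg hC, if_neg (fun h => hC (hCeq.2 h))]
    by_cases hA : φ ∈ ΦA
    · rw [if_pos hA, if_pos (hAeq.1 hA), hBoeq]
      exact cn_insert_eq_of_equiv heq
    rw [if_neg hA, if_neg (fun h => hA (hAeq.2 h))]
    by_cases hnK : φ.neg ∈ K
    · rw [if_pos hnK, if_pos (hKeq.1 hnK)]
      exact cn_singleton_eq_of_equiv heq
    · rw [if_neg hnK, if_neg (fun h => hnK (hKeq.2 h))]
      exact cn_insert_eq_of_equiv heq
  · -- representation
    intro φ
    refine ⟨fun h => hfilt.f1 φ h, fun h => (hvC φ h).symm, ?_⟩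
    intro hA
    rw [hvA φ hA]
    by_cases hnK : φ.neg ∈ K
    · obtain ⟨hsub, hCnK⟩ := hfilt.f3b φ hnK hA
      have hded : Bo φ = Cn (Bo φ) := (hfilt.f3 φ hnK).2
      ext χ
      constructor
      · intro h
        exact ⟨(hsub h).1, subset_Cn (Set.mem_union_left _ h)⟩
      · rintro ⟨hK, hB⟩
        have h1 : φ.imp χ ∈ Cn (Bo φ) := deduction.1 hB
        have h2 : φ.neg.imp χ ∈ Cn (Bo φ) := by
          apply deduction.1
          rw [hCnK]
          exact hK
        have h3 : χ ∈ Cn (Bo φ) := by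
          apply cn_of_entails [φ.imp χ, φ.neg.imp χ]
          · intro x hx
            rcases List.mem_cons.1 hx with rfl | hx
            · exact h1
            · have : x = φ.neg.imp χ := by simpa using hx
              rw [this]; exact h2
          · intro v hv
            have a1 := hv (φ.imp χ) (by simp)
            have a2 := hv (φ.neg.imp χ) (by simp)
            rw [eval_imp] at a1 a2
            cases hφv : eval v φ
            · rw [show eval v φ.neg = (!(eval v φ)) from rfl, hφv] at a2
              simpa using a2
            · rw [hφv] at a1
              simpa using a1
        rw [hded]
        exact h3
    · rw [hfilt.f2b φ hnK hA]
      exact (Set.inter_eq_left.2 (hKsub φ)).symm
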